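/- Let ξ, η, σ ∈ ℝ, and write a ≡ b to mean that a − b is an integer multiple of 2π. Then the following two conditions hold simultaneously — (i) ξ ≡ 2η + σ and ξ ≡ η + 2σ + π, and (ii) ξ ≡ η or ξ ≡ σ + π — if and only if either (ξ ≡ π/2 and η ≡ π/2 and σ ≡ −π/2) or (ξ ≡ −π/2 and η ≡ −π/2 and σ ≡ π/2). -/
import Mathlib


/-- Congruence modulo `2π`: `a ≡ b` iff `a − b` is an integer multiple of `2π`. -/
def Mod2Pi (a b : ℝ) : Prop := ∃ k : ℤ, a - b = 2 * Real.pi * k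

/-- The space-time resonance set of the Ablowitz–Ladik phase: the intersection of
the space-resonance conditions `ξ ≡ 2η + σ`, `ξ ≡ η + 2σ + π` with the
time-resonance condition `ξ ≡ η` or `ξ ≡ σ + π` is exactly
`ξ ≡ η ≡ π/2, σ ≡ −π/2` or `ξ ≡ η ≡ −π/2, σ ≡ π/2` (all mod `2π`). -/
theorem al_space_time_resonances (ξ η σ : ℝ) :
    ((Mod2Pi ξ (2 * η + σ) ∧ Mod2Pi ξ (η + 2 * σ + Real.pi)) ∧
        (Mod2Pi ξ η ∨ Mod2Pi ξ (σ + Real.pi))) ↔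
      ((Mod2Pi ξ (Real.pi / 2) ∧ Mod2Pi η (Real.pi / 2) ∧ Mod2Pi σ (-(Real.pi / 2))) ∨
        (Mod2Pi ξ (-(Real.pi / 2)) ∧ Mod2Pi η (-(Real.pi / 2)) ∧ Mod2Pi σ (Real.pi / 2))) := by
  unfold Mod2Pi
  constructor
  · rintro ⟨⟨⟨k₁, h1⟩, ⟨k₂, h2⟩⟩, ⟨k₃, h3⟩ | ⟨k₃, h3⟩⟩
    · rcases Int.even_or_odd (k₂ - k₃) with ⟨n, hn⟩ | ⟨n, hn⟩
      · have hn' : (k₂ : ℝ) - (k₃ : ℝ) = (n : ℝ) + (n : ℝ) := by exact_mod_cast hn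
        exact Or.inl
          ⟨⟨n - k₁ + 2 * k₃, (by push_cast; linear_combination h2 / 2 + 3 * h3 / 2 - h1 + Real.pi * hn')⟩,
            ⟨n - k₁ + k₃, (by push_cast; linear_combination h2 / 2 + h3 / 2 - h1 + Real.pi * hn')⟩,
            ⟨-n, (by push_cast; linear_combination (h3 - h2) / 2 - Real.pi * hn')⟩⟩
      · have hn' : (k₂ : ℝ) - (k₃ : ℝ) = 2 * (n : ℝ) + 1 := by exact_mod_cast hn
        exact Or.inr
          ⟨⟨n + 1 - k₁ + 2 * k₃, (by push_cast; linear_combination h2 / 2 + 3 * h3 / 2 - h1 + Real.pi * hn')⟩,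
            ⟨n + 1 - k₁ + k₃, (by push_cast; linear_combination h2 / 2 + h3 / 2 - h1 + Real.pi * hn')⟩,
            ⟨-(n + 1), (by push_cast; linear_combination (h3 - h2) / 2 - Real.pi * hn')⟩⟩
    · rcases Int.even_or_odd (k₁ - k₃) with ⟨n, hn⟩ | ⟨n, hn⟩
      · have hn' : (k₁ : ℝ) - (k₃ : ℝ) = (n : ℝ) + (n : ℝ) := by exact_mod_cast hn
        exact Or.inl
          ⟨⟨n - k₂ + 2 * k₃, (by push_cast; linear_combination h1 / 2 + 3 * h3 / 2 - h2 + Real.pi * hn')⟩,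
            ⟨-n, (by push_cast; linear_combination (h3 - h1) / 2 - Real.pi * hn')⟩,
            ⟨n - k₂ + k₃, (by push_cast; linear_combination h1 / 2 + h3 / 2 - h2 + Real.pi * hn')⟩⟩
      · have hn' : (k₁ : ℝ) - (k₃ : ℝ) = 2 * (n : ℝ) + 1 := by exact_mod_cast hn
        exact Or.inr
          ⟨⟨n - k₂ + 2 * k₃ + 1, (by push_cast; linear_combination h1 / 2 + 3 * h3 / 2 - h2 + Real.pi * hn')⟩,
            ⟨-n, (by push_cast; linear_combination (h3 - h1) / 2 - Real.pi * hn')⟩,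
            ⟨n - k₂ + k₃, (by push_cast; linear_combination h1 / 2 + h3 / 2 - h2 + Real.pi * hn')⟩⟩
  · rintro (⟨⟨a, ha⟩, ⟨b, hb⟩, ⟨c, hc⟩⟩ | ⟨⟨a, ha⟩, ⟨b, hb⟩, ⟨c, hc⟩⟩)
    · exact ⟨⟨⟨a - 2 * b - c, by push_cast; linarith⟩,
        ⟨a - b - 2 * c, by push_cast; linarith⟩⟩,
        Or.inl ⟨a - b, by push_cast; linarith⟩⟩
    · exact ⟨⟨⟨a - 2 * b - c, by push_cast; linarith⟩,
        ⟨a - b - 2 * c - 1, by push_cast; linarith⟩⟩,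
        Or.inl ⟨a - b, by push_cast; linarith⟩⟩
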